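/- (Binomial GLMM with logit link.) Fix n_i ≥ 1, an n_i × p matrix X_i, an n_i × r matrix Z_i, β ∈ ℝ^p, a symmetric positive definite r × r matrix Ω, and positive integers m_{i1}, …, m_{in_i}. For the binomial model with logit link, h_{ij}(η) = m_{ij} log(1 + exp(η)), so h_{ij}'(η) = m_{ij} exp(η)/(1+exp(η)) and h_{ij}''(η) = m_{ij} exp(η)/(1+exp(η))². Define g_i, H_i componentwise from h_{ij}', h_{ij}'', and Λ_i(η̂) = (Ω + Z_i^T H_i(η̂) Z_i)^{−1}, λ_i(η̂) = Λ_i(η̂) Z_i^T { y_i − g_i(η̂) + H_i(η̂)(η̂ − X_i β) }. Suppose every entry of y_i is either 0 or m_{ij}. Then λ_i(η̂) → 0 as, for each j, η̂_{ij} → −∞ if y_{ij} = 0 and η̂_{ij} → +∞ if y_{ij} = m_{ij}. -/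

import Mathlib

open Matrix Filter Topology
private lemma t_mul_exp_atBot : Tendsto (fun t : ℝ => t * Real.exp t) atBot (nhds 0) := by
  have h : Tendsto (fun s : ℝ => -(s ^ 1 * Real.exp (-s))) atTop (nhds 0) := by
    simpa using (Real.tendsto_pow_mul_exp_neg_atTop_nhds_zero 1).neg
  have h2 := h.comp tendsto_neg_atBot_atTop
  refine h2.congr fun t => ?_
  simp [Function.comp]

private lemma t_mul_exp_neg_atTop : Tendsto (fun t : ℝ => t * Real.exp (-t)) atTop (nhds 0) := by
  simpa using Real.tendsto_pow_mul_exp_neg_atTop_nhds_zero 1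

private lemma keyH (c : ℝ) (F : Filter ℝ) (h : F = atBot ∨ F = atTop) :
    Tendsto (fun t => c * Real.exp t / (1 + Real.exp t) ^ 2) F (nhds 0) := by
  rcases h with h | h <;> subst h
  · have : Tendsto (fun t : ℝ => c * Real.exp t * ((1 + Real.exp t) ^ 2)⁻¹) atBot
        (nhds (c * 0 * ((1 + 0) ^ 2)⁻¹)) := by
      exact ((tendsto_const_nhds.mul Real.tendsto_exp_atBot).mul
        (((tendsto_const_nhds.add Real.tendsto_exp_atBot).pow 2).inv₀ (by norm_num)))
    simpa [div_eq_mul_inv] using this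
  · have : Tendsto (fun t : ℝ => c * Real.exp (-t) * ((Real.exp (-t) + 1) ^ 2)⁻¹) atTop
        (nhds (c * 0 * ((0 + 1) ^ 2)⁻¹)) :=
      ((tendsto_const_nhds.mul Real.tendsto_exp_neg_atTop_nhds_zero).mul
        (((Real.tendsto_exp_neg_atTop_nhds_zero.add tendsto_const_nhds).pow 2).inv₀ (by norm_num)))
    simp only [mul_zero, zero_mul] at this
    refine this.congr fun t => ?_
    have h1 : (0:ℝ) < 1 + Real.exp t := by positivity
    have h2 : (0:ℝ) < Real.exp (-t) + 1 := by positivity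
    rw [Real.exp_neg]
    field_simp

private lemma keyW (c d yv : ℝ) (F : Filter ℝ)
    (h : (yv = 0 ∧ F = atBot) ∨ (yv = c ∧ F = atTop)) :
    Tendsto (fun t => yv - c * Real.exp t / (1 + Real.exp t)
      + c * Real.exp t / (1 + Real.exp t) ^ 2 * (t - d)) F (nhds 0) := by
  rcases h with ⟨hy, hFe⟩ | ⟨hy, hFe⟩ <;> subst hFe <;> rw [hy]
  · -- atBot case, yv = 0
    have h1 : Tendsto (fun t : ℝ => 0 - c * Real.exp t / (1 + Real.exp t)) atBot (nhds 0) := by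
      have : Tendsto (fun t : ℝ => c * Real.exp t * (1 + Real.exp t)⁻¹) atBot
          (nhds (c * 0 * (1 + 0)⁻¹)) :=
        (tendsto_const_nhds.mul Real.tendsto_exp_atBot).mul
          ((tendsto_const_nhds.add Real.tendsto_exp_atBot).inv₀ (by norm_num))
      simp only [mul_zero, zero_mul] at this
      simpa [div_eq_mul_inv] using this.neg
    have h2 : Tendsto (fun t : ℝ => c * Real.exp t / (1 + Real.exp t) ^ 2 * (t - d)) atBot
        (nhds 0) := by
      have : Tendsto (fun t : ℝ => c * (t * Real.exp t - d * Real.exp t)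
          * ((1 + Real.exp t) ^ 2)⁻¹) atBot (nhds (c * (0 - d * 0) * ((1 + 0) ^ 2)⁻¹)) :=
        (tendsto_const_nhds.mul (t_mul_exp_atBot.sub
          (tendsto_const_nhds.mul Real.tendsto_exp_atBot))).mul
          (((tendsto_const_nhds.add Real.tendsto_exp_atBot).pow 2).inv₀ (by norm_num))
      simp only [mul_zero, sub_zero, zero_sub, mul_neg, neg_zero, zero_mul] at this
      refine this.congr fun t => by ring
    simpa using h1.add h2
  · -- atTop case, yv = c
    have h1 : Tendsto (fun t : ℝ => c - c * Real.exp t / (1 + Real.exp t)) atTop (nhds 0) := by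
      have hb : Tendsto (fun t : ℝ => 1 + Real.exp t) atTop atTop :=
        tendsto_atTop_add_const_left _ 1 Real.tendsto_exp_atTop
      have : Tendsto (fun t : ℝ => c * (1 + Real.exp t)⁻¹) atTop (nhds (c * 0)) :=
        tendsto_const_nhds.mul (tendsto_inv_atTop_zero.comp hb)
      simp only [mul_zero] at this
      refine this.congr fun t => ?_
      have h1 : (0:ℝ) < 1 + Real.exp t := by positivity
      field_simp
      ring
    have h2 : Tendsto (fun t : ℝ => c * Real.exp t / (1 + Real.exp t) ^ 2 * (t - d)) atTop
        (nhds 0) := by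
      have : Tendsto (fun t : ℝ => c * (t * Real.exp (-t) - d * Real.exp (-t))
          * ((Real.exp (-t) + 1) ^ 2)⁻¹) atTop (nhds (c * (0 - d * 0) * ((0 + 1) ^ 2)⁻¹)) :=
        (tendsto_const_nhds.mul (t_mul_exp_neg_atTop.sub
          (tendsto_const_nhds.mul Real.tendsto_exp_neg_atTop_nhds_zero))).mul
          (((Real.tendsto_exp_neg_atTop_nhds_zero.add tendsto_const_nhds).pow 2).inv₀
            (by norm_num))
      simp only [mul_zero, sub_zero, zero_sub, mul_neg, neg_zero, zero_mul] at this
      refine this.congr fun t => ?_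
      have hp1 : (0:ℝ) < 1 + Real.exp t := by positivity
      have hp2 : (0:ℝ) < Real.exp (-t) + 1 := by positivity
      rw [Real.exp_neg]
      field_simp
    simpa using h1.add h2

/-- **Noncentering limit for the binomial GLMM with logit link (Corollary 1(ii)).**
For the binomial model, `h_{ij}(η) = m_{ij} log(1 + exp(η))`, so
`h_{ij}'(η) = m_{ij} e^η/(1+e^η)` and `h_{ij}''(η) = m_{ij} e^η/(1+e^η)²`. With
`Λ_i(η̂) = (Ω + Z_iᵀ H_i(η̂) Z_i)⁻¹` and
`λ_i(η̂) = Λ_i(η̂) Z_iᵀ{ y_i − g_i(η̂) + H_i(η̂)(η̂ − X_i β) }`, if every entry of `y_i`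
is `0` or `m_{ij}`, then `λ_i(η̂) → 0` as, for each `j`, `η̂_{ij} → −∞` if `y_{ij} = 0`
and `η̂_{ij} → +∞` if `y_{ij} = m_{ij}`. -/
theorem binomial_lambda_limit_zero
    (ni p r : ℕ) (hni : 1 ≤ ni)
    (X : Matrix (Fin ni) (Fin p) ℝ) (Z : Matrix (Fin ni) (Fin r) ℝ)
    (β : Fin p → ℝ)
    (Ω : Matrix (Fin r) (Fin r) ℝ) (hΩsym : Ωᵀ = Ω) (hΩ : Ω.PosDef)
    (m : Fin ni → ℕ) (hm : ∀ j, 0 < m j)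
    (y : Fin ni → ℝ)
    (g : (Fin ni → ℝ) → Fin ni → ℝ)
    (hg : ∀ η j, g η j = (m j : ℝ) * Real.exp (η j) / (1 + Real.exp (η j)))
    (H : (Fin ni → ℝ) → Matrix (Fin ni) (Fin ni) ℝ)
    (hH : ∀ η, H η
      = Matrix.diagonal fun j => (m j : ℝ) * Real.exp (η j) / (1 + Real.exp (η j)) ^ 2)
    (lam : (Fin ni → ℝ) → Fin r → ℝ)
    (hlam : ∀ ηh, lam ηh
      = (Ω + Zᵀ * H ηh * Z)⁻¹ *ᵥ (Zᵀ *ᵥ (y - g ηh + H ηh *ᵥ (ηh - X *ᵥ β))))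
    (F : Fin ni → Filter ℝ)
    (hF : ∀ j, (y j = 0 ∧ F j = atBot) ∨ (y j = (m j : ℝ) ∧ F j = atTop)) :
    Tendsto lam (Filter.pi F) (nhds 0) := by
  have hdet : Ω.det ≠ 0 := hΩ.det_pos.ne'
  -- the inner vector tends to 0
  have hw0 : Tendsto (fun η => y - g η + H η *ᵥ (η - X *ᵥ β)) (Filter.pi F)
      (nhds 0) := by
    rw [tendsto_pi_nhds]
    intro j
    have hkey := keyW ((m j : ℝ)) ((X *ᵥ β) j) (y j) (F j) (hF j)
    have hcomp := hkey.comp (tendsto_eval_pi F j)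
    simp only [Pi.zero_apply]
    refine hcomp.congr fun η => ?_
    simp [hg, hH, Matrix.mulVec_diagonal, Function.comp, Function.eval]
  -- apply Zᵀ
  have hZcont : Continuous fun v : Fin ni → ℝ => Zᵀ *ᵥ v :=
    continuous_const.matrix_mulVec continuous_id
  have hw : Tendsto (fun η => Zᵀ *ᵥ (y - g η + H η *ᵥ (η - X *ᵥ β))) (Filter.pi F)
      (nhds 0) := by
    have := (hZcont.tendsto 0).comp hw0
    simpa [Function.comp_def, Matrix.mulVec_zero] using this
  -- H tends to 0
  have hH0 : Tendsto H (Filter.pi F) (nhds 0) := by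
    have hv : Tendsto (fun η (j : Fin ni) =>
        (m j : ℝ) * Real.exp (η j) / (1 + Real.exp (η j)) ^ 2) (Filter.pi F) (nhds 0) := by
      rw [tendsto_pi_nhds]
      intro j
      have hkey : F j = atBot ∨ F j = atTop := by rcases hF j with ⟨_, h⟩ | ⟨_, h⟩ <;> tauto
      have := (keyH ((m j : ℝ)) (F j) hkey).comp (tendsto_eval_pi F j)
      simpa [Function.comp_def, Function.eval] using this
    have hdcont : Continuous fun v : Fin ni → ℝ => Matrix.diagonal v :=
      continuous_id.matrix_diagonal
    have := (hdcont.tendsto 0).comp hv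
    have h0 : Matrix.diagonal (0 : Fin ni → ℝ) = 0 := by
      ext i j; simp [Matrix.diagonal_apply]
    rw [h0] at this
    refine this.congr fun η => (hH η).symm
  -- the matrix tends to Ω
  have hA : Tendsto (fun η => Ω + Zᵀ * H η * Z) (Filter.pi F) (nhds Ω) := by
    have hcont : Continuous fun M : Matrix (Fin ni) (Fin ni) ℝ => Ω + Zᵀ * M * Z :=
      continuous_const.add ((continuous_const.matrix_mul continuous_id).matrix_mul
        continuous_const)
    have := (hcont.tendsto 0).comp hH0
    simpa [Function.comp_def] using this
  -- the inverse tends to Ω⁻¹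
  have hAinv : Tendsto (fun η => (Ω + Zᵀ * H η * Z)⁻¹) (Filter.pi F) (nhds Ω⁻¹) := by
    have hic : ContinuousAt Inv.inv Ω :=
      continuousAt_matrix_inv Ω (by rw [Ring.inverse_eq_inv']; exact continuousAt_inv₀ hdet)
    exact (hic.tendsto).comp hA
  -- combine
  have hmv : Continuous fun q : Matrix (Fin r) (Fin r) ℝ × (Fin r → ℝ) => q.1 *ᵥ q.2 :=
    continuous_fst.matrix_mulVec continuous_snd
  have hfin := (hmv.tendsto (Ω⁻¹, 0)).comp (hAinv.prodMk_nhds hw)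
  simp only [Function.comp_def, Matrix.mulVec_zero] at hfin
  refine hfin.congr fun η => (hlam η).symm
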